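/- arXiv:2001.01712 — 2 statements merged into one kernel-verified Lean document; each statement's English description precedes it below -/
import Mathlib

section
/- Let α : ℝ² → (0,∞) be C² and ℤ²-periodic, and let r : ℝ² → (0,∞) be C² and ℤ²-periodic with −∂²_{y₁} r(y) − ∂²_{y₂}(α(y) r(y)) = 0 for all y ∈ ℝ². If ∂_{y₁} r ≡ 0 on ℝ², then ∂_{y₁}∂_{y₂}(log α) ≡ 0 on ℝ². -/
open MeasureTheory

/-- The unit cube `[0,1]^n` in `ℝ^n`. -/
def unitCube (n : ℕ) : Set (Fin n → ℝ) := Set.Icc 0 1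

/-- Partial derivative `∂_{y_i} f`. -/
noncomputable def pd {n : ℕ} (f : (Fin n → ℝ) → ℝ) (i : Fin n) : (Fin n → ℝ) → ℝ :=
  fun y => fderiv ℝ f y (Pi.single i 1)

/-- Second partial derivative `∂_{y_i} ∂_{y_j} f`. -/
noncomputable def pd2 {n : ℕ} (f : (Fin n → ℝ) → ℝ) (i j : Fin n) : (Fin n → ℝ) → ℝ :=
  pd (pd f j) i

/-- Third partial derivative `∂_{y_i} ∂_{y_j} ∂_{y_k} f`. -/
noncomputable def pd3 {n : ℕ} (f : (Fin n → ℝ) → ℝ) (i j k : Fin n) : (Fin n → ℝ) → ℝ :=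
  pd (pd (pd f k) j) i

/-- `ℤ^n`-periodicity. -/
def ZPeriodic {n : ℕ} (f : (Fin n → ℝ) → ℝ) : Prop :=
  ∀ (y : Fin n → ℝ) (z : Fin n → ℤ), f (y + fun i => (z i : ℝ)) = f y

/-- Admissible matrix field: C², periodic, symmetric, uniformly elliptic. -/
def IsAdmissible {n : ℕ} (a : Fin n → Fin n → (Fin n → ℝ) → ℝ) : Prop :=
  (∀ i j, ContDiff ℝ 2 (a i j)) ∧
  (∀ i j, ZPeriodic (a i j)) ∧
  (∀ i j y, a i j y = a j i y) ∧
  ∃ lam Lam : ℝ, 0 < lam ∧ lam ≤ Lam ∧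
    ∀ (y ξ : Fin n → ℝ),
      lam * (∑ i, ξ i ^ 2) ≤ ∑ i, ∑ j, a i j y * ξ i * ξ j ∧
      ∑ i, ∑ j, a i j y * ξ i * ξ j ≤ Lam * (∑ i, ξ i ^ 2)

/-- Corrector pair `(v^{kl}, ā_{kl})`. -/
def IsCorrector {n : ℕ} (a : Fin n → Fin n → (Fin n → ℝ) → ℝ)
    (k l : Fin n) (v : (Fin n → ℝ) → ℝ) (abar : ℝ) : Prop :=
  ContDiff ℝ 2 v ∧ ZPeriodic v ∧
  ∀ y, -(∑ i, ∑ j, a i j y * pd2 v i j y) - a k l y = -abar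

/-- Invariant measure for the matrix field `a`. -/
def IsInvariantMeasure {n : ℕ} (a : Fin n → Fin n → (Fin n → ℝ) → ℝ)
    (r : (Fin n → ℝ) → ℝ) : Prop :=
  ContDiff ℝ 2 r ∧ ZPeriodic r ∧ (∀ y, 0 < r y) ∧
  (∀ y, ∑ i, ∑ j, pd2 (fun x => a i j x * r x) i j y = 0) ∧
  ∫ y in unitCube n, r y = 1

/-- `u` is Cᵐ on a neighborhood of the closure of `U`, with all partial
derivatives up to order `m` bounded there. -/
def SmoothBounded {n : ℕ} (m : ℕ) (U : Set (Fin n → ℝ)) (u : (Fin n → ℝ) → ℝ) : Prop :=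
  ∃ V : Set (Fin n → ℝ), IsOpen V ∧ closure U ⊆ V ∧ ContDiffOn ℝ m u V ∧
    ∀ k : ℕ, k ≤ m → ∃ M : ℝ, ∀ x ∈ V, ‖iteratedFDerivWithin ℝ k u V x‖ ≤ M

lemma pd_contDiff {n : ℕ} {f : (Fin n → ℝ) → ℝ} (hf : ContDiff ℝ 2 f) (i : Fin n) :
    ContDiff ℝ 1 (pd f i) := by
  have h := (hf.fderiv_right (m := 1) (by norm_num)).clm_apply
    (contDiff_const (c := (Pi.single i 1 : Fin n → ℝ)))
  show ContDiff ℝ 1 (fun y => fderiv ℝ f y (Pi.single i 1))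
  simpa using h

lemma pd2_eq_snd {n : ℕ} {f : (Fin n → ℝ) → ℝ} (hf : ContDiff ℝ 2 f) (i j : Fin n)
    (y : Fin n → ℝ) :
    pd2 f i j y = fderiv ℝ (fderiv ℝ f) y (Pi.single i 1) (Pi.single j 1) := by
  have hd : DifferentiableAt ℝ (fderiv ℝ f) y :=
    ((hf.fderiv_right (m := 1) (by norm_num)).differentiable one_ne_zero).differentiableAt
  have h := fderiv_clm_apply hd (differentiableAt_const (Pi.single j 1 : Fin n → ℝ))
  show fderiv ℝ (fun x => fderiv ℝ f x (Pi.single j 1)) y (Pi.single i 1) = _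
  rw [h]
  simp

lemma pd2_symm {n : ℕ} {f : (Fin n → ℝ) → ℝ} (hf : ContDiff ℝ 2 f) (i j : Fin n)
    (y : Fin n → ℝ) : pd2 f i j y = pd2 f j i y := by
  rw [pd2_eq_snd hf i j y, pd2_eq_snd hf j i y]
  exact (hf.contDiffAt.isSymmSndFDerivAt (by simp)) _ _

lemma hasDerivAt_line {n : ℕ} (F : (Fin n → ℝ) → ℝ) (hF : Differentiable ℝ F)
    (y v : Fin n → ℝ) (t : ℝ) :
    HasDerivAt (fun s : ℝ => F (y + s • v)) (fderiv ℝ F (y + t • v) v) t := by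
  have hline : HasDerivAt (fun s : ℝ => y + s • v) v t := by
    simpa using ((hasDerivAt_id t).smul_const v).const_add y
  exact (hF (y + t • v)).hasFDerivAt.comp_hasDerivAt t hline

/-- If a C² periodic function has vanishing second pure derivative in direction `i`,
then its first derivative in direction `i` vanishes. -/
lemma pd_eq_zero_of_pd2 {n : ℕ} {f : (Fin n → ℝ) → ℝ} (hf : ContDiff ℝ 2 f)
    (hper : ZPeriodic f) (i : Fin n) (h2 : ∀ y, pd2 f i i y = 0) :
    ∀ y, pd f i y = 0 := by
  intro y
  set v : Fin n → ℝ := Pi.single i 1 with hv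
  have hfd : Differentiable ℝ f := hf.differentiable two_ne_zero
  have hpdd : Differentiable ℝ (pd f i) := (pd_contDiff hf i).differentiable one_ne_zero
  -- pd f i is constant along the line
  have hφ : ∀ t : ℝ, pd f i (y + t • v) = pd f i y := by
    have hconst : ∀ a b : ℝ, pd f i (y + a • v) = pd f i (y + b • v) := by
      apply is_const_of_deriv_eq_zero
      · intro t
        have hl : HasDerivAt (fun s : ℝ => y + s • v) v t := by
          simpa using ((hasDerivAt_id t).smul_const v).const_add y
        exact ((hpdd (y + t • v)).hasFDerivAt.comp_hasDerivAt t hl).differentiableAt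
      · intro t
        have h := hasDerivAt_line (pd f i) hpdd y v t
        have : fderiv ℝ (pd f i) (y + t • v) v = pd2 f i i (y + t • v) := rfl
        rw [this, h2] at h
        exact h.deriv
    intro t
    simpa using hconst t 0
  set c : ℝ := pd f i y with hc
  have hψ : ∀ t : ℝ, HasDerivAt (fun s : ℝ => f (y + s • v)) c t := by
    intro t
    have h := hasDerivAt_line f hfd y v t
    have : fderiv ℝ f (y + t • v) v = pd f i (y + t • v) := rfl
    rw [this, hφ t] at h
    exact h
  have hlin : ∀ a b : ℝ, f (y + a • v) - a * c = f (y + b • v) - b * c := by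
    apply is_const_of_deriv_eq_zero
    · exact fun t => ((hψ t).sub ((hasDerivAt_id t).mul_const c)).differentiableAt
    · intro t
      have := ((hψ t).sub (by simpa using (hasDerivAt_id t).mul_const c)).deriv
      simp at this
      exact this
  have hkey := hlin 1 0
  simp only [one_smul, zero_smul, add_zero, one_mul, zero_mul, sub_zero] at hkey
  -- periodicity: f (y + v) = f y
  have hper' : f (y + v) = f y := by
    have h := hper y (Pi.single i 1)
    have hcast : (fun k => ((Pi.single i 1 : Fin n → ℤ) k : ℝ)) = v := by
      funext k
      by_cases hk : k = i <;> simp [hv, Pi.single_apply, hk]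
    rwa [hcast] at h
  rw [hper'] at hkey
  linarith


/-- if the invariant measure of `diag(1, α)` in 2d does not
depend on `y₁`, then `(log α)_{y₁ y₂} ≡ 0`. -/
theorem log_alpha_mixed_deriv_zero
    (α : (Fin 2 → ℝ) → ℝ) (hαC : ContDiff ℝ 2 α) (hαper : ZPeriodic α)
    (hαpos : ∀ y, 0 < α y)
    (r : (Fin 2 → ℝ) → ℝ) (hrC : ContDiff ℝ 2 r) (hrper : ZPeriodic r)
    (hrpos : ∀ y, 0 < r y)
    (hpde : ∀ y, -(pd2 r 0 0 y) - pd2 (fun x => α x * r x) 1 1 y = 0)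
    (hr1 : ∀ y, pd r 0 y = 0) :
    ∀ y, pd2 (fun x => Real.log (α x)) 0 1 y = 0 := by
  have hαd : Differentiable ℝ α := hαC.differentiable two_ne_zero
  have hrd : Differentiable ℝ r := hrC.differentiable two_ne_zero
  have hαne : ∀ x, α x ≠ 0 := fun x => (hαpos x).ne'
  have hrne : ∀ x, r x ≠ 0 := fun x => (hrpos x).ne'
  have hpd0 : pd r 0 = fun _ => (0 : ℝ) := funext hr1
  -- pure second derivatives involving the vanishing pd r 0
  have hr00 : ∀ x, pd2 r 0 0 x = 0 := by
    intro x
    show pd (pd r 0) 0 x = 0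
    rw [hpd0]
    simp [pd]
  have hr10 : ∀ x, pd2 r 1 0 x = 0 := by
    intro x
    show pd (pd r 0) 1 x = 0
    rw [hpd0]
    simp [pd]
  have hr01 : ∀ x, pd2 r 0 1 x = 0 := fun x => (pd2_symm hrC 0 1 x).trans (hr10 x)
  -- the product g = α r
  have hgC : ContDiff ℝ 2 (fun x => α x * r x) := hαC.mul hrC
  have hgper : ZPeriodic (fun x => α x * r x) := by
    intro y z
    simp only [hαper y z, hrper y z]
  have hg11 : ∀ x, pd2 (fun x => α x * r x) 1 1 x = 0 := by
    intro x
    have h := hpde x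
    have h0 := hr00 x
    linarith
  have hg1 : ∀ x, pd (fun x => α x * r x) 1 x = 0 :=
    pd_eq_zero_of_pd2 hgC hgper 1 hg11
  -- product rule: pd α 1
  have hpdα1 : ∀ x, pd α 1 x = -(α x) * pd r 1 x / r x := by
    intro x
    have h := fderiv_mul (hαd x) (hrd x)
    have h' : pd (fun x => α x * r x) 1 x = α x * pd r 1 x + r x * pd α 1 x := by
      show fderiv ℝ (fun y => α y * r y) x (Pi.single 1 1) = _
      rw [show (fun y => α y * r y) = α * r from rfl, h]
      simp [pd]
    rw [hg1 x] at h'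
    rw [eq_div_iff (hrne x)]
    linear_combination -h'
  -- first derivative of log α
  have hlog1 : ∀ x, pd (fun x => Real.log (α x)) 1 x = -(pd r 1 x) / r x := by
    intro x
    have hcomp : HasFDerivAt (fun x => Real.log (α x)) ((α x)⁻¹ • fderiv ℝ α x) x :=
      (hαd x).hasFDerivAt.log (hαne x)
    have : pd (fun x => Real.log (α x)) 1 x = (α x)⁻¹ * pd α 1 x := by
      show fderiv ℝ (fun x => Real.log (α x)) x (Pi.single 1 1) = _
      rw [hcomp.fderiv]
      simp [pd]
    rw [this, hpdα1 x]
    field_simp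
    rw [mul_div_mul_left _ _ (hαne x)]
  intro y
  show pd (pd (fun x => Real.log (α x)) 1) 0 y = 0
  rw [funext hlog1]
  -- compute the derivative of -(pd r 1)/r in direction 0
  have hp1d : DifferentiableAt ℝ (pd r 1) y :=
    ((pd_contDiff hrC 1).differentiable one_ne_zero).differentiableAt
  have hinv : HasFDerivAt (fun x => (r x)⁻¹) ((-(r y ^ 2)⁻¹) • fderiv ℝ r y) y :=
    (hasDerivAt_inv (hrne y)).comp_hasFDerivAt y (hrd y).hasFDerivAt
  have hmul : HasFDerivAt (fun x => -(pd r 1 x) * (r x)⁻¹)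
      ((-(pd r 1 y)) • ((-(r y ^ 2)⁻¹) • fderiv ℝ r y) +
        (r y)⁻¹ • (-(fderiv ℝ (pd r 1) y))) y :=
    HasFDerivAt.mul hp1d.hasFDerivAt.neg hinv
  have heq : (fun x => -(pd r 1 x) / r x) = fun x => -(pd r 1 x) * (r x)⁻¹ := by
    funext x; rw [div_eq_mul_inv]
  rw [heq]
  show fderiv ℝ (fun x => -(pd r 1 x) * (r x)⁻¹) y (Pi.single 0 1) = 0
  rw [hmul.fderiv]
  have e1 : fderiv ℝ r y (Pi.single 0 1) = 0 := hr1 y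
  have e2 : fderiv ℝ (pd r 1) y (Pi.single 0 1) = 0 := hr01 y
  simp [e1, e2]
end

section
/- Let n ≥ 2. Let A⁰ = (a⁰_{ij}) be an admissible matrix field on ℝⁿ with an invariant measure r⁰, and assume Σ_{i=1}^n ∂_{y_i}(a⁰_{ij}(y) r⁰(y)) = 0 for all y ∈ ℝⁿ and every j ∈ {1,…,n}. Let ξ : ℝ → ℝ be C² and 1-periodic, let δ > 0, and define the symmetric matrix field A¹ = (a¹_{ij}) by a¹₁₁(y) := a⁰₁₁(y) + δ ξ(y₁+y₂)/r⁰(y), a¹₂₂(y) := a⁰₂₂(y) − δ ξ(y₁+y₂)/r⁰(y), and a¹_{ij} := a⁰_{ij} for all other (i,j). Then: (i) Σ_{i,j} ∂_{y_i}∂_{y_j}(a¹_{ij}(y) r⁰(y)) = 0 for all y ∈ ℝⁿ (so r⁰ still satisfies the invariant-measure equation for A¹); and (ii) Σ_{i=1}^n ∂_{y_i}(a¹_{i1}(y) r⁰(y)) = δ ξ'(y₁+y₂) for all y ∈ ℝⁿ. -/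
open MeasureTheory

lemma pd_add' {n : ℕ} {f g : (Fin n → ℝ) → ℝ} {y : Fin n → ℝ}
    (hf : DifferentiableAt ℝ f y) (hg : DifferentiableAt ℝ g y) (i : Fin n) :
    pd (fun x => f x + g x) i y = pd f i y + pd g i y := by
  simp [pd, fderiv_fun_add hf hg]

lemma contDiff_pd {n : ℕ} {f : (Fin n → ℝ) → ℝ} (hf : ContDiff ℝ 2 f) (j : Fin n) :
    ContDiff ℝ 1 (pd f j) := by
  have h1 : ContDiff ℝ 1 (fderiv ℝ f) := hf.fderiv_right (by norm_num)
  exact (ContinuousLinearMap.apply ℝ ℝ (Pi.single j (1:ℝ))).contDiff.comp h1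

lemma pd_comp_proj {n : ℕ} (i0 i1 : Fin n) (h : ℝ → ℝ) (hh : Differentiable ℝ h)
    (C : ℝ) (i : Fin n) (y : Fin n → ℝ) :
    pd (fun x => C * h (x i0 + x i1)) i y
      = C * deriv h (y i0 + y i1) *
        ((if i = i0 then 1 else 0) + (if i = i1 then 1 else 0)) := by
  have hL : HasFDerivAt (fun x : Fin n → ℝ => x i0 + x i1)
      ((ContinuousLinearMap.proj i0 : (Fin n → ℝ) →L[ℝ] ℝ) + ContinuousLinearMap.proj i1) y :=
    ((ContinuousLinearMap.proj (R := ℝ) (φ := fun _ : Fin n => ℝ) i0) +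
      ContinuousLinearMap.proj i1).hasFDerivAt
  have hd := ((hh (y i0 + y i1)).hasDerivAt.comp_hasFDerivAt y hL).const_mul C
  simp only [Function.comp] at hd
  rw [pd, hd.fderiv]
  simp only [ContinuousLinearMap.smul_apply, ContinuousLinearMap.add_apply,
    ContinuousLinearMap.proj_apply, Pi.single_apply, smul_eq_mul, eq_comm]
  split_ifs <;> ring

/-- Step 1 of the density proof: perturbing `a⁰₁₁` and `a⁰₂₂`
by `±δξ(y₁+y₂)/r⁰` keeps `r⁰` an invariant density but produces
`∂_{y_i}(a¹_{i1} r⁰) = δ ξ'(y₁+y₂)`. -/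
theorem perturbation_step_one {n : ℕ} (hn : 2 ≤ n)
    (i0 i1 : Fin n) (hi0 : (i0 : ℕ) = 0) (hi1 : (i1 : ℕ) = 1)
    (a0 : Fin n → Fin n → (Fin n → ℝ) → ℝ) (hA0 : IsAdmissible a0)
    (r0 : (Fin n → ℝ) → ℝ) (hr0 : IsInvariantMeasure a0 r0)
    (hdiv0 : ∀ (j : Fin n) (y : Fin n → ℝ),
      (∑ i, pd (fun x => a0 i j x * r0 x) i y) = 0)
    (ξ : ℝ → ℝ) (hξC : ContDiff ℝ 2 ξ) (hξper : ∀ t : ℝ, ξ (t + 1) = ξ t)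
    (δ : ℝ) (hδ : 0 < δ)
    (a1 : Fin n → Fin n → (Fin n → ℝ) → ℝ)
    (ha1_00 : ∀ y, a1 i0 i0 y = a0 i0 i0 y + δ * ξ (y i0 + y i1) / r0 y)
    (ha1_11 : ∀ y, a1 i1 i1 y = a0 i1 i1 y - δ * ξ (y i0 + y i1) / r0 y)
    (ha1_other : ∀ i j, ¬(i = i0 ∧ j = i0) → ¬(i = i1 ∧ j = i1) →
      ∀ y, a1 i j y = a0 i j y) :
    (∀ y, ∑ i, ∑ j, pd2 (fun x => a1 i j x * r0 x) i j y = 0) ∧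
    (∀ y, (∑ i, pd (fun x => a1 i i0 x * r0 x) i y) = δ * deriv ξ (y i0 + y i1)) := by
  -- setup
  have hne : i0 ≠ i1 := by intro h; rw [h, hi1] at hi0; omega
  obtain ⟨hr0C, hr0per, hr0pos, hr0inv, hr0int⟩ := hr0
  have hξd : Differentiable ℝ ξ := hξC.differentiable (by norm_num)
  have hξ'C : ContDiff ℝ 1 (deriv ξ) := by
    have h2 : ContDiff ℝ (1 + 1) ξ := by exact_mod_cast hξC
    exact (contDiff_succ_iff_deriv.mp h2).2.2
  have hξ'd : Differentiable ℝ (deriv ξ) := hξ'C.differentiable (by norm_num)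
  have hsd : Differentiable ℝ (fun x : Fin n → ℝ => x i0 + x i1) :=
    ((ContinuousLinearMap.proj (R := ℝ) (φ := fun _ : Fin n => ℝ) i0) +
      ContinuousLinearMap.proj i1).differentiable
  have hgd : ∀ C : ℝ, Differentiable ℝ (fun x : Fin n → ℝ => C * ξ (x i0 + x i1)) :=
    fun C => (hξd.comp hsd).const_mul C
  have hC2 : ∀ i j, ContDiff ℝ 2 (fun x => a0 i j x * r0 x) :=
    fun i j => (hA0.1 i j).mul hr0C
  have hd1 : ∀ i j, Differentiable ℝ (fun x => a0 i j x * r0 x) :=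
    fun i j => (hC2 i j).differentiable (by norm_num)
  -- first derivative of the bump
  have hpd_g : ∀ (C : ℝ) (j : Fin n),
      pd (fun x : Fin n → ℝ => C * ξ (x i0 + x i1)) j
        = fun y => (C * ((if j = i0 then 1 else 0) + (if j = i1 then 1 else 0)))
            * deriv ξ (y i0 + y i1) := by
    intro C j; funext y
    rw [pd_comp_proj i0 i1 ξ hξd]; ring
  have hpd_g_diff : ∀ (C : ℝ) (j : Fin n),
      Differentiable ℝ (pd (fun x : Fin n → ℝ => C * ξ (x i0 + x i1)) j) := by
    intro C j; rw [hpd_g C j]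
    exact (hξ'd.comp hsd).const_mul _
  -- second derivative of the bump
  have hpd2_g : ∀ (C : ℝ) (i j : Fin n) (y : Fin n → ℝ),
      pd2 (fun x : Fin n → ℝ => C * ξ (x i0 + x i1)) i j y
        = C * ((if j = i0 then 1 else 0) + (if j = i1 then 1 else 0))
            * ((if i = i0 then 1 else 0) + (if i = i1 then 1 else 0))
            * deriv (deriv ξ) (y i0 + y i1) := by
    intro C i j y
    show pd (pd (fun x : Fin n → ℝ => C * ξ (x i0 + x i1)) j) i y = _
    rw [hpd_g C j, pd_comp_proj i0 i1 (deriv ξ) hξ'd]; ring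
  -- additivity of pd2 for such perturbations
  have hpd2_add : ∀ (f : (Fin n → ℝ) → ℝ), ContDiff ℝ 2 f → ∀ (C : ℝ) (i j : Fin n)
      (y : Fin n → ℝ),
      pd2 (fun x => f x + C * ξ (x i0 + x i1)) i j y
        = pd2 f i j y + pd2 (fun x : Fin n → ℝ => C * ξ (x i0 + x i1)) i j y := by
    intro f hf C i j y
    have hfd : Differentiable ℝ f := hf.differentiable (by norm_num)
    have h1 : pd (fun x => f x + C * ξ (x i0 + x i1)) j
        = fun x => pd f j x + pd (fun x : Fin n → ℝ => C * ξ (x i0 + x i1)) j x := by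
      funext x; exact pd_add' (hfd x) (hgd C x) j
    show pd (pd (fun x => f x + C * ξ (x i0 + x i1)) j) i y = _
    rw [h1]
    exact pd_add' ((contDiff_pd hf j).differentiable (by norm_num) y) (hpd_g_diff C j y) i
  -- pointwise identities for the perturbed entries
  have heq00 : (fun x => a1 i0 i0 x * r0 x)
      = fun x => a0 i0 i0 x * r0 x + δ * ξ (x i0 + x i1) := by
    funext x; rw [ha1_00]; field_simp [(hr0pos x).ne']
  have heq11 : (fun x => a1 i1 i1 x * r0 x)
      = fun x => a0 i1 i1 x * r0 x + (-δ) * ξ (x i0 + x i1) := by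
    funext x; rw [ha1_11]; field_simp [(hr0pos x).ne']; ring
  constructor
  · -- part (i)
    have hterm : ∀ (i j : Fin n) (y : Fin n → ℝ),
        pd2 (fun x => a1 i j x * r0 x) i j y
          = pd2 (fun x => a0 i j x * r0 x) i j y
            + (if i = i0 ∧ j = i0 then δ * deriv (deriv ξ) (y i0 + y i1) else 0)
            + (if i = i1 ∧ j = i1 then -(δ * deriv (deriv ξ) (y i0 + y i1)) else 0) := by
      intro i j y
      by_cases h00 : i = i0 ∧ j = i0
      · obtain ⟨h1, h2⟩ := h00
        rw [h1, h2, heq00, hpd2_add _ (hC2 i0 i0) δ, hpd2_g]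
        simp [hne]
      · by_cases h11 : i = i1 ∧ j = i1
        · obtain ⟨h1, h2⟩ := h11
          rw [h1, h2] at h00 ⊢
          rw [heq11, hpd2_add _ (hC2 i1 i1) (-δ), hpd2_g]
          simp [hne.symm, h00]
        · have heq : (fun x => a1 i j x * r0 x) = fun x => a0 i j x * r0 x := by
            funext x; rw [ha1_other i j h00 h11]
          rw [heq]; simp [h00, h11]
    intro y
    simp only [hterm, Finset.sum_add_distrib, hr0inv y, ite_and]
    simp [Finset.sum_ite_eq', hne]
  · -- part (ii)
    have hterm2 : ∀ (i : Fin n) (y : Fin n → ℝ),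
        pd (fun x => a1 i i0 x * r0 x) i y
          = pd (fun x => a0 i i0 x * r0 x) i y
            + (if i = i0 then δ * deriv ξ (y i0 + y i1) else 0) := by
      intro i y
      by_cases hii : i = i0
      · rw [hii, heq00, pd_add' (hd1 i0 i0 y) (hgd δ y), pd_comp_proj i0 i1 ξ hξd]
        simp [hne]
      · have heq : (fun x => a1 i i0 x * r0 x) = fun x => a0 i i0 x * r0 x := by
          funext x
          rw [ha1_other i i0 (fun h => hii h.1) (fun h => hne h.2)]
        rw [heq]; simp [hii]
    intro y
    simp only [hterm2, Finset.sum_add_distrib, hdiv0 i0 y]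
    simp [Finset.sum_ite_eq']
end
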